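/- Let p be an odd prime, q a power of p, and n ≥ 1 with p dividing n. Let f, g ∈ F_q[T] with f of degree 1 and g a nonzero constant, p ∤ (leading coefficient of f)·g. Let w_n be the Lucas-type sequence w_0 = 2, w_1 = f, w_n = f·w_{n-1} + g·w_{n-2}. Then w_n(T) is a perfect power in F_q[T] if and only if p divides n. -/
import Mathlib

open Polynomial

noncomputable def lucasw {R : Type*} [CommRing R] (f g : Polynomial R) : ℕ → Polynomial R
  | 0 => 2
  | 1 => f
  | n + 2 => f * lucasw f g (n + 1) + g * lucasw f g n

noncomputable def lucasu {R : Type*} [CommRing R] (f g : Polynomial R) : ℕ → Polynomial R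
  | 0 => 0
  | 1 => 1
  | n + 2 => f * lucasu f g (n + 1) + g * lucasu f g n

lemma two_step_induction {P : ℕ → Prop} (h0 : P 0) (h1 : P 1)
    (ih : ∀ n, P n → P (n + 1) → P (n + 2)) : ∀ n, P n := by
  have key : ∀ n, P n ∧ P (n + 1) := by
    intro n
    induction n with
    | zero => exact ⟨h0, h1⟩
    | succ k hk => exact ⟨hk.2, ih k hk.1 hk.2⟩
  exact fun n => (key n).1

section aux

variable {R : Type*} [CommRing R] (f g : Polynomial R)

lemma lucasw_zero : lucasw f g 0 = 2 := rfl
lemma lucasw_one : lucasw f g 1 = f := rfl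
lemma lucasw_rec (n : ℕ) : lucasw f g (n + 2) = f * lucasw f g (n + 1) + g * lucasw f g n := rfl
lemma lucasu_zero : lucasu f g 0 = 0 := rfl
lemma lucasu_one : lucasu f g 1 = 1 := rfl
lemma lucasu_rec (n : ℕ) : lucasu f g (n + 2) = f * lucasu f g (n + 1) + g * lucasu f g n := rfl

lemma lucasw_eq_u (n : ℕ) :
    lucasw f g (n + 1) = f * lucasu f g (n + 1) + 2 * g * lucasu f g n := by
  induction n using two_step_induction with
  | h0 => rw [lucasw_one, lucasu_one, lucasu_zero]; ring
  | h1 => rw [lucasw_rec, lucasu_rec, lucasw_one, lucasw_zero, lucasu_one, lucasu_zero]; ring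
  | ih n ih0 ih1 =>
    have e1 := lucasw_rec f g (n + 1)
    have e2 := lucasu_rec f g (n + 1)
    have e3 := lucasu_rec f g n
    linear_combination e1 + f * ih1 + g * ih0 - f * e2 - 2 * g * e3

lemma lucas_quad : ∀ n : ℕ,
    (lucasw f g n ^ 2 - (f ^ 2 + 4 * g) * lucasu f g n ^ 2 = 4 * (-g) ^ n) ∧
    (lucasw f g (n + 1) ^ 2 - (f ^ 2 + 4 * g) * lucasu f g (n + 1) ^ 2 = 4 * (-g) ^ (n + 1)) ∧
    (lucasw f g (n + 1) * lucasw f g n - (f ^ 2 + 4 * g) * (lucasu f g (n + 1) * lucasu f g n)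
      = 2 * f * (-g) ^ n) := by
  intro n
  induction n with
  | zero =>
    refine ⟨?_, ?_, ?_⟩ <;>
      simp only [zero_add, lucasw_zero, lucasw_one, lucasu_zero, lucasu_one, pow_zero,
        pow_one] <;> ring
  | succ k hk =>
    obtain ⟨hA, hA1, hB⟩ := hk
    refine ⟨hA1, ?_, ?_⟩
    · rw [lucasw_rec, lucasu_rec]
      linear_combination f ^ 2 * hA1 + g ^ 2 * hA + 2 * f * g * hB
    · rw [lucasw_rec, lucasu_rec]
      linear_combination f * hA1 + g * hB

lemma lucasw_deriv (hg : derivative g = 0) (n : ℕ) :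
    derivative (lucasw f g n) = (n : Polynomial R) * derivative f * lucasu f g n := by
  induction n using two_step_induction with
  | h0 => simp [lucasw_zero, lucasu_zero]
  | h1 => simp [lucasw_one, lucasu_one]
  | ih n ih0 ih1 =>
    rw [lucasw_rec, lucasu_rec, derivative_add, derivative_mul, derivative_mul, hg, ih0, ih1]
    push_cast
    linear_combination (derivative f) * lucasw_eq_u f g n

end aux

section deg

variable {F : Type*} [Field F]

lemma lucasw_degree (h2 : (2 : F) ≠ 0) (f : Polynomial F) (hf : f.degree = 1)
    (g : F) (hg : g ≠ 0) (n : ℕ) : (lucasw f (C g) n).degree = n := by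
  induction n using two_step_induction with
  | h0 =>
    rw [lucasw_zero, ← map_ofNat (C : F →+* Polynomial F) 2, degree_C h2, Nat.cast_zero]
  | h1 => rw [lucasw_one, hf, Nat.cast_one]
  | ih n ih0 ih1 =>
    rw [lucasw_rec]
    have hlt : (C g * lucasw f (C g) n).degree < (f * lucasw f (C g) (n + 1)).degree := by
      rw [degree_mul, degree_mul, hf, ih0, ih1, degree_C hg, zero_add]
      rw [← Nat.cast_one, ← Nat.cast_add]
      exact_mod_cast (by omega : n < 1 + (n + 1))
    rw [degree_add_eq_left_of_degree_lt hlt, degree_mul, hf, ih1, ← Nat.cast_one,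
      ← Nat.cast_add]
    norm_num
    ring

end deg

lemma lucasw_frobenius (p : ℕ) [Fact p.Prime] {F : Type*} [Field F] [CharP F p]
    (f g : Polynomial F) (m : ℕ) :
    lucasw f g (p * m) = (lucasw f g m) ^ p := by
  set P : Polynomial (Polynomial F) := X ^ 2 - (C f * X + C g) with hP
  have hlt2 : (C f * X + C g).degree < 2 := degree_linear_lt
  have hmonic : P.Monic := monic_X_pow_sub hlt2
  have hdeg2 : P.degree = 2 := by
    rw [hP, degree_sub_eq_left_of_degree_lt (by rwa [degree_X_pow]), degree_X_pow]
    rfl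
  haveI : Nontrivial (AdjoinRoot P) := AdjoinRoot.nontrivial P (by rw [hdeg2]; norm_num)
  have hinj : Function.Injective (AdjoinRoot.of P) := by
    have pb := AdjoinRoot.powerBasis' hmonic
    have h := pb.basis.algebraMap_injective
    rwa [AdjoinRoot.algebraMap_eq] at h
  haveI : CharP (AdjoinRoot P) p := charP_of_injective_ringHom hinj p
  set α := AdjoinRoot.root P with hα
  set β := AdjoinRoot.of P f - α with hβ
  have hroot := AdjoinRoot.eval₂_root P
  rw [hP] at hroot
  simp only [eval₂_sub, eval₂_add, eval₂_mul, eval₂_pow, eval₂_X, eval₂_C] at hroot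
  have hsum : AdjoinRoot.of P f = α + β := by rw [hβ]; ring
  have hprod : AdjoinRoot.of P g = -(α * β) := by rw [hβ]; linear_combination -hroot
  have key : ∀ n : ℕ, AdjoinRoot.of P (lucasw f g n) = α ^ n + β ^ n := by
    intro n
    induction n using two_step_induction with
    | h0 => rw [lucasw_zero, map_ofNat, pow_zero, pow_zero]; norm_num
    | h1 => rw [lucasw_one, hsum]; ring
    | ih n ih0 ih1 =>
      rw [lucasw_rec, map_add, map_mul, map_mul, ih0, ih1, hsum, hprod]
      ring
  apply hinj
  rw [map_pow, key, key, mul_comm p m, pow_mul, pow_mul, add_pow_char]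

theorem lucasw_perfect_power_iff (p : ℕ) [Fact p.Prime] (hp : Odd p)
    (F : Type*) [Field F] [Fintype F] [CharP F p]
    (f : Polynomial F) (hf : f.degree = 1) (g : F) (hg : g ≠ 0)
    (hlc : f.leadingCoeff * g ≠ 0)
    (n : ℕ) (hn : 1 ≤ n) :
    (∃ (u : Polynomial F) (j : ℕ), 1 < j ∧ lucasw f (C g) n = u ^ j) ↔ p ∣ n := by
  have hfne : f ≠ 0 := fun h => by simp [h] at hf
  have h2 : (2 : F) ≠ 0 := by
    intro h
    have hd : p ∣ 2 := (CharP.cast_eq_zero_iff F p 2).mp (by exact_mod_cast h)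
    have hp2 := (Nat.prime_dvd_prime_iff_eq Fact.out Nat.prime_two).mp hd
    rw [hp2] at hp
    simp [Nat.odd_iff] at hp
  constructor
  · rintro ⟨u, j, hj, hu⟩
    by_contra hpn
    have ha : f.leadingCoeff ≠ 0 := leadingCoeff_ne_zero.mpr hfne
    have hnd : f.natDegree = 1 := natDegree_eq_of_degree_eq_some hf
    have hdf : derivative f = C f.leadingCoeff := by
      conv_lhs => rw [eq_X_add_C_of_degree_le_one hf.le]
      rw [derivative_add, derivative_C, derivative_mul, derivative_C, derivative_X]
      simp [leadingCoeff, hnd]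
    have hderiv := lucasw_deriv f (C g) derivative_C n
    rw [hdf] at hderiv
    set w := lucasw f (C g) n with hw
    have hdegw : w.degree = n := lucasw_degree h2 f hf g hg n
    have hwne : w ≠ 0 := by
      intro h
      rw [h, degree_zero] at hdegw
      exact absurd hdegw.symm (by simp)
    have hnF : (n : F) ≠ 0 := fun h => hpn ((CharP.cast_eq_zero_iff F p n).mp h)
    have hune : u ≠ 0 := by
      rintro rfl
      rw [zero_pow (by omega)] at hu
      exact hwne hu
    have hunotunit : ¬ IsUnit u := by
      intro h
      have hu0 : u.degree = 0 := degree_eq_zero_of_isUnit h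
      rw [hu, degree_pow, hu0, smul_zero] at hdegw
      have : n = 0 := by exact_mod_cast hdegw.symm
      omega
    obtain ⟨q, hqirr, hqu⟩ := WfDvdMonoid.exists_irreducible_factor hunotunit hune
    have hq2 : q ^ 2 ∣ w := by
      rw [hu]
      exact dvd_trans (pow_dvd_pow_of_dvd hqu 2) (pow_dvd_pow u (by omega))
    have hqw : q ∣ w := dvd_trans (dvd_pow_self q (by norm_num)) hq2
    obtain ⟨r, hr⟩ := hq2
    have hqd : q ∣ derivative w :=
      ⟨2 * derivative q * r + q * derivative r, by
        rw [hr, derivative_mul, derivative_pow]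
        push_cast
        simp only [map_ofNat]
        ring⟩
    have hqun : q ∣ lucasu f (C g) n := by
      rw [hderiv, ← C_eq_natCast, ← C_mul] at hqd
      have hc : (n : F) * f.leadingCoeff ≠ 0 := mul_ne_zero hnF ha
      have := hqd.mul_left (C ((n : F) * f.leadingCoeff)⁻¹)
      rwa [← mul_assoc, ← C_mul, inv_mul_cancel₀ hc, C_1, one_mul] at this
    have hquad := (lucas_quad f (C g) n).1
    rw [← hw] at hquad
    have hqconst : q ∣ C (4 * (-g) ^ n) := by
      have h4 : (4 : Polynomial F) * (-C g) ^ n = C (4 * (-g) ^ n) := by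
        rw [← C_neg, ← C_pow, C_mul, map_ofNat]
      rw [← h4, ← hquad]
      exact dvd_sub (dvd_pow hqw two_ne_zero) ((dvd_pow hqun two_ne_zero).mul_left _)
    have hc2 : (4 : F) * (-g) ^ n ≠ 0 := by
      apply mul_ne_zero _ (pow_ne_zero _ (neg_ne_zero.mpr hg))
      intro h4
      apply h2
      have : (4 : F) = 2 * 2 := by norm_num
      rw [this] at h4
      rcases mul_eq_zero.mp h4 with h | h <;> exact h
    exact hqirr.not_isUnit
      (isUnit_of_dvd_unit hqconst (isUnit_C.mpr (isUnit_iff_ne_zero.mpr hc2)))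
  · rintro ⟨m, rfl⟩
    exact ⟨lucasw f (C g) m, p, (Fact.out : p.Prime).one_lt, lucasw_frobenius p f (C g) m⟩
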